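/- Let s and b be integers with s+1 ≥ b ≥ 0. Let Q = v_0, v_1, ..., v_{s+1} be a path in a graph, let I be a nonempty independent set of vertices contained in {v_1, ..., v_s}, and let B be a set of b edges of Q such that no edge in B is incident to any vertex of I. Then |I| ≤ ⌈(s - b)/2⌉. -/

import Mathlib

/-- Lemma (path independent-set counting): if `Q = v_0, …, v_{s+1}` is a path in a
graph `G`, `I` is a nonempty independent set contained in `{v_1, …, v_s}`, and `B` is a
set of `b` edges of `Q` none of which is incident to a vertex of `I`, then
`|I| ≤ ⌈(s - b)/2⌉`. -/
theorem stmt_0 {α : Type*} [DecidableEq α] (G : SimpleGraph α) (s b : ℕ)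
    (hb : b ≤ s + 1)
    (v : Fin (s + 2) → α) (hinj : Function.Injective v)
    (hadj : ∀ i : Fin (s + 1), G.Adj (v i.castSucc) (v i.succ))
    (I : Finset α) (hne : I.Nonempty)
    (hIsub : ∀ x ∈ I, ∃ i : Fin (s + 2), 1 ≤ (i : ℕ) ∧ (i : ℕ) ≤ s ∧ v i = x)
    (hind : ∀ x ∈ I, ∀ y ∈ I, ¬ G.Adj x y)
    (B : Finset (Fin (s + 1))) (hBcard : B.card = b)
    (hBavoid : ∀ i ∈ B, v i.castSucc ∉ I ∧ v i.succ ∉ I) :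
    I.card ≤ (s - b + 1) / 2 := by
  classical
  set w : ℕ → α := fun m => if h : m < s + 2 then v ⟨m, h⟩ else v 0 with hw
  have hwv : ∀ (i : Fin (s + 2)), w (i : ℕ) = v i := by
    intro i
    simp only [hw, i.isLt, dif_pos]
  have hwadj : ∀ m, m ≤ s → G.Adj (w m) (w (m + 1)) := by
    intro m hm
    have h := hadj ⟨m, by omega⟩
    have h1 : w m = v (Fin.castSucc ⟨m, by omega⟩) := by
      rw [← hwv]; rfl
    have h2 : w (m + 1) = v (Fin.succ ⟨m, by omega⟩) := by
      rw [← hwv]; rfl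
    rw [h1, h2]; exact h
  -- index function
  have hIdx : ∀ x ∈ I, ∃ n : ℕ, 1 ≤ n ∧ n ≤ s ∧ w n = x := by
    intro x hx
    obtain ⟨i, h1, h2, h3⟩ := hIsub x hx
    exact ⟨(i : ℕ), h1, h2, by rw [hwv]; exact h3⟩
  choose g hg1 hg2 hg3 using hIdx
  set N : Finset ℕ := I.attach.image (fun x => g x.1 x.2) with hNdef
  have hmemN : ∀ n, n ∈ N ↔ ∃ x : {y // y ∈ I}, g x.1 x.2 = n := by
    intro n
    simp [hNdef]
  have hNcard : N.card = I.card := by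
    rw [hNdef]
    rw [Finset.card_image_of_injOn, Finset.card_attach]
    intro x _ y _ hxy
    have h' : w (g x.1 x.2) = w (g y.1 y.2) := by
      simpa using congrArg w hxy
    rw [hg3 x.1 x.2, hg3 y.1 y.2] at h'
    exact Subtype.ext h'
  have hN1 : ∀ n ∈ N, 1 ≤ n ∧ n ≤ s ∧ w n ∈ I := by
    intro n hn
    obtain ⟨x, hx⟩ := (hmemN n).1 hn
    refine ⟨hx ▸ hg1 x.1 x.2, hx ▸ hg2 x.1 x.2, ?_⟩
    rw [← hx, hg3 x.1 x.2]; exact x.2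
  have hNoCons : ∀ n ∈ N, n + 1 ∉ N := by
    intro n hn hn1
    obtain ⟨_, hns, hwn⟩ := hN1 n hn
    obtain ⟨_, _, hwn1⟩ := hN1 (n + 1) hn1
    exact hind _ hwn _ hwn1 (hwadj n hns)
  set Bn : Finset ℕ := B.image Fin.val with hBn
  have hBncard : Bn.card = b := by
    rw [hBn, Finset.card_image_of_injective _ Fin.val_injective, hBcard]
  have hBnprop : ∀ m ∈ Bn, m ≤ s ∧ m ∉ N ∧ m + 1 ∉ N := by
    intro m hm
    rw [hBn, Finset.mem_image] at hm
    obtain ⟨i, hi, rfl⟩ := hm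
    obtain ⟨h1, h2⟩ := hBavoid i hi
    have hle : (i : ℕ) ≤ s := by omega
    have e1 : w (i : ℕ) = v i.castSucc := by rw [← hwv]; rfl
    have e2 : w ((i : ℕ) + 1) = v i.succ := by rw [← hwv]; rfl
    refine ⟨hle, ?_, ?_⟩
    · intro hmN
      exact h1 (e1 ▸ (hN1 _ hmN).2.2)
    · intro hmN
      exact h2 (e2 ▸ (hN1 _ hmN).2.2)
  -- counting
  set T : Finset ℕ := N.biUnion (fun n => {n - 1, n}) with hT
  have hsep : ∀ n ∈ N, ∀ m ∈ N, n ≠ m → n + 2 ≤ m ∨ m + 2 ≤ n := by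
    intro n hn m hm hnm
    have h1 : n + 1 ∉ N := hNoCons n hn
    have h2 : m + 1 ∉ N := hNoCons m hm
    rcases lt_trichotomy n m with h | h | h
    · left
      rcases Nat.lt_or_ge (n + 1) m with h' | h'
      · omega
      · have : m = n + 1 := by omega
        exact absurd (this ▸ hm) h1
    · exact absurd h hnm
    · right
      rcases Nat.lt_or_ge (m + 1) n with h' | h'
      · omega
      · have : n = m + 1 := by omega
        exact absurd (this ▸ hn) h2
  have hTcard : T.card = 2 * N.card := by
    rw [hT, Finset.card_biUnion, Finset.sum_congr rfl
      (fun n hn => (by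
        rw [Finset.card_insert_of_notMem, Finset.card_singleton]
        have := (hN1 n hn).1
        simp only [Finset.mem_singleton]
        omega : ({n - 1, n} : Finset ℕ).card = 2))]
    · rw [Finset.sum_const, smul_eq_mul, mul_comm]
    · intro n hn m hm hnm
      have := hsep n hn m hm hnm
      have h1 := (hN1 n hn).1
      have h2 := (hN1 m hm).1
      rw [Function.onFun, Finset.disjoint_left]
      intro k hk hk'
      simp only [Finset.mem_insert, Finset.mem_singleton] at hk hk'
      omega
  have hTB : Disjoint T Bn := by
    rw [Finset.disjoint_left]
    intro k hk hk'
    obtain ⟨hks, h1, h2⟩ := hBnprop k hk'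
    rw [hT, Finset.mem_biUnion] at hk
    obtain ⟨n, hn, hkn⟩ := hk
    simp only [Finset.mem_insert, Finset.mem_singleton] at hkn
    have hn1 := (hN1 n hn).1
    rcases hkn with rfl | rfl
    · have : n - 1 + 1 = n := by omega
      exact h2 (this ▸ hn)
    · exact h1 hn
  have hsub : T ∪ Bn ⊆ Finset.range (s + 1) := by
    intro k hk
    rw [Finset.mem_union] at hk
    rw [Finset.mem_range]
    rcases hk with hk | hk
    · rw [hT, Finset.mem_biUnion] at hk
      obtain ⟨n, hn, hkn⟩ := hk
      simp only [Finset.mem_insert, Finset.mem_singleton] at hkn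
      have := (hN1 n hn).2.1
      omega
    · have := (hBnprop k hk).1
      omega
  have hcount : 2 * I.card + b ≤ s + 1 := by
    have := Finset.card_le_card hsub
    rw [Finset.card_union_of_disjoint hTB, hTcard, hNcard, hBncard,
      Finset.card_range] at this
    exact this
  omega
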